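/- Let p be a prime, r ≥ 1, 0 ≤ i ≤ r, 𝒮 a finite set, and P_{ZS} a probability mass function on Z_{p^r} × 𝒮; let (Z,S) ~ P_{ZS}. For z^n ∈ Z_{p^r}^n, s^n ∈ 𝒮^n and ε > 0, define S_{i,ε}(z^n, s^n) = {z̃ ∈ Z_{p^r}^n : z̃ − z^n ∈ (p^i·Z_{p^r})^n and the pair (z̃, s^n) is strongly ε-typical for P_{ZS}}. Then for every δ > 0 there exists ε₀ > 0 such that for every 0 < ε ≤ ε₀ there exists N such that for all n ≥ N and all pairs (z^n, s^n) that are strongly ε-typical for P_{ZS}, |S_{i,ε}(z^n, s^n)| ≤ 2^{n·(H(Z|S) − H([Z]_i|S) + δ)}. -/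

import Mathlib

open scoped Classical

noncomputable section

/-- Base-2 Shannon entropy of a probability mass function on a finite type
(with the convention `0 · log 0 = 0`, automatic since `Real.logb 2 0 = 0`). -/
def ent {A : Type*} [Fintype A] (P : A → ℝ) : ℝ :=
  -∑ a, P a * Real.logb 2 (P a)

/-- Distribution (pushforward pmf) of a random variable `X` on a finite
probability space with weights `μ`. -/
def distOf {Ω A : Type*} [Fintype Ω] (μ : Ω → ℝ) (X : Ω → A) : A → ℝ :=
  fun a => ∑ ω, if X ω = a then μ ω else 0

/-- Entropy `H(X)` of a random variable `X` on a finite probability space. -/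
def Hent {Ω A : Type*} [Fintype Ω] [Fintype A] (μ : Ω → ℝ) (X : Ω → A) : ℝ :=
  ent (distOf μ X)

/-- Conditional entropy `H(X | Y) = H(X,Y) − H(Y)`. -/
def condEnt {Ω A B : Type*} [Fintype Ω] [Fintype A] [Fintype B]
    (μ : Ω → ℝ) (X : Ω → A) (Y : Ω → B) : ℝ :=
  Hent μ (fun ω => (X ω, Y ω)) - Hent μ Y

/-- The additive subgroup `p^i · Z_{p^r} = {p^i * x : x ∈ Z_{p^r}}` of `Z_{p^r}`. -/
def pZ (p r i : ℕ) : AddSubgroup (ZMod (p ^ r)) where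
  carrier := Set.range (fun x : ZMod (p ^ r) => (p : ZMod (p ^ r)) ^ i * x)
  add_mem' := by rintro a b ⟨x, rfl⟩ ⟨y, rfl⟩; exact ⟨x + y, by ring⟩
  zero_mem' := ⟨0, by ring⟩
  neg_mem' := by rintro a ⟨x, rfl⟩; exact ⟨-x, by ring⟩

instance {G : Type*} [AddGroup G] [Finite G] (H : AddSubgroup G) : Fintype (G ⧸ H) :=
  Fintype.ofFinite _

instance {G : Type*} [AddGroup G] [Finite G] (H : AddSubgroup G) : Fintype H :=
  Fintype.ofFinite _

/-- A sequence `x ∈ A^n` is strongly `ε`-typical for the pmf `Q` if each empirical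
frequency is within `ε` of `Q a`, and symbols of zero probability never occur. -/
def StronglyTypical {A : Type*} [Fintype A] {n : ℕ} (Q : A → ℝ)
    (x : Fin n → A) (ε : ℝ) : Prop :=
  ∀ a : A,
    |((Finset.univ.filter (fun j => x j = a)).card : ℝ) / n - Q a| ≤ ε ∧
    (Q a = 0 → (Finset.univ.filter (fun j => x j = a)).card = 0)

attribute [local instance 2000] Classical.propDecidable

private lemma two_rpow_sum {ι : Type*} (s : Finset ι) (f : ι → ℝ) :
    (2:ℝ) ^ (∑ a ∈ s, f a) = ∏ a ∈ s, (2:ℝ) ^ f a := by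
  classical
  induction s using Finset.induction_on with
  | empty => simp
  | insert _ _ h ih => rw [Finset.sum_insert h, Finset.prod_insert h, Real.rpow_add two_pos, ih]

theorem stmt9 (p r i : ℕ) (hp : p.Prime) (hr : 1 ≤ r) (hi : i ≤ r) [NeZero (p ^ r)]
    {𝒮 : Type*} [Fintype 𝒮]
    (P : ZMod (p ^ r) × 𝒮 → ℝ) (hP0 : ∀ zs, 0 ≤ P zs) (hP1 : ∑ zs, P zs = 1) :
    ∀ δ > (0 : ℝ), ∃ ε₀ > (0 : ℝ), ∀ ε : ℝ, 0 < ε → ε ≤ ε₀ → ∃ N : ℕ, ∀ n ≥ N,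
      ∀ (z : Fin n → ZMod (p ^ r)) (s : Fin n → 𝒮),
        StronglyTypical P (fun j => (z j, s j)) ε →
        (Nat.card {zt : Fin n → ZMod (p ^ r) //
              (∀ j, zt j - z j ∈ pZ p r i) ∧
              StronglyTypical P (fun j => (zt j, s j)) ε} : ℝ)
          ≤ 2 ^ ((n : ℝ) *
              (condEnt P Prod.fst Prod.snd
                - condEnt P
                    (fun zs => ((QuotientAddGroup.mk zs.1) : ZMod (p ^ r) ⧸ pZ p r i))
                    Prod.snd + δ)) := by
  intro δ hδ
  set Qt := ZMod (p ^ r) ⧸ pZ p r i with hQt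
  set π : ZMod (p ^ r) × 𝒮 → Qt × 𝒮 :=
    fun ω => ((QuotientAddGroup.mk ω.1 : Qt), ω.2) with hπ
  set R : Qt × 𝒮 → ℝ := distOf P π with hRdef
  set W : ZMod (p ^ r) × 𝒮 → ℝ := fun a => P a / R (π a) with hWdef
  set L : ZMod (p ^ r) × 𝒮 → ℝ := fun a => Real.logb 2 (W a) with hLdef
  set C : ℝ := ∑ a, |L a| with hCdef
  have hC0 : 0 ≤ C := Finset.sum_nonneg fun a _ => abs_nonneg _
  refine ⟨δ / (C + 1), by positivity, ?_⟩
  intro ε hε hεle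
  have hεC : ε * C ≤ δ := by
    have h1 : ε * (C + 1) ≤ δ := (le_div_iff₀ (by positivity : (0:ℝ) < C + 1)).mp hεle
    nlinarith
  refine ⟨1, ?_⟩
  intro n hn z s _hzs
  have hn0 : (0:ℝ) < n := by exact_mod_cast hn
  -- basic facts about R and W
  have hR0 : ∀ qs, 0 ≤ R qs := by
    intro qs
    rw [hRdef]
    refine Finset.sum_nonneg fun ω _ => ?_
    by_cases h : π ω = qs <;> simp [h, hP0 ω]
  have hPR : ∀ a, P a ≤ R (π a) := by
    intro a
    have h := Finset.single_le_sum (f := fun ω => if π ω = π a then P ω else 0)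
      (fun ω _ => by by_cases h : π ω = π a <;> simp [h, hP0 ω]) (Finset.mem_univ a)
    simpa [hRdef, distOf] using h
  have hW0 : ∀ a, 0 ≤ W a := fun a => div_nonneg (hP0 a) (hR0 _)
  have hWpos : ∀ a, 0 < P a → 0 < W a := fun a ha =>
    div_pos ha (lt_of_lt_of_le ha (hPR a))
  -- key identity : ∑ P·L = ent R − ent P
  have hfiber : ∀ qs : Qt × 𝒮,
      ∑ a ∈ Finset.univ.filter (fun a => π a = qs), P a = R qs := by
    intro qs
    rw [hRdef]
    simp [distOf, Finset.sum_filter]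
  have hPL : ∑ a, P a * L a = ent R - ent P := by
    have h1 : ∀ a, P a * L a
        = P a * Real.logb 2 (P a) - P a * Real.logb 2 (R (π a)) := by
      intro a
      rcases eq_or_lt_of_le (hP0 a) with h | h
      · simp [hLdef, hWdef, ← h]
      · have hRa : 0 < R (π a) := lt_of_lt_of_le h (hPR a)
        rw [hLdef]
        show P a * Real.logb 2 (P a / R (π a)) = _
        rw [Real.logb_div (ne_of_gt h) (ne_of_gt hRa)]
        ring
    rw [Finset.sum_congr rfl (fun a _ => h1 a), Finset.sum_sub_distrib]
    have h2 : ∑ a, P a * Real.logb 2 (R (π a))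
        = ∑ qs, R qs * Real.logb 2 (R qs) := by
      rw [← Finset.sum_fiberwise Finset.univ π
        (fun a => P a * Real.logb 2 (R (π a)))]
      refine Finset.sum_congr rfl fun qs _ => ?_
      have hcg : ∀ a ∈ Finset.filter (fun a => π a = qs) Finset.univ,
          P a * Real.logb 2 (R (π a)) = P a * Real.logb 2 (R qs) := fun a ha => by
        rw [(Finset.mem_filter.mp ha).2]
      rw [Finset.sum_congr rfl hcg, ← Finset.sum_mul, hfiber qs]
    rw [h2, ent, ent]
    ring
  -- the counting set as a Finset
  set T : Finset (Fin n → ZMod (p ^ r)) := Finset.univ.filter (fun zt =>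
      (∀ j, zt j - z j ∈ pZ p r i) ∧
      StronglyTypical P (fun j => (zt j, s j)) ε) with hT
  have hcard : (Nat.card {zt : Fin n → ZMod (p ^ r) //
      (∀ j, zt j - z j ∈ pZ p r i) ∧
      StronglyTypical P (fun j => (zt j, s j)) ε} : ℕ) = T.card := by
    rw [Nat.card_eq_fintype_card, Fintype.card_subtype, hT]
  -- per element lower bound on the product of W's
  have hlow : ∀ zt ∈ T,
      (2:ℝ) ^ (-((n:ℝ) * ((ent P - ent R) + δ))) ≤ ∏ j, W (zt j, s j) := by
    intro zt hzt
    obtain ⟨hmem, htyp⟩ := (Finset.mem_filter.mp hzt).2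
    set N : ZMod (p ^ r) × 𝒮 → ℕ :=
      fun a => (Finset.univ.filter (fun j => (zt j, s j) = a)).card with hN
    have htyp1 : ∀ a, |((N a : ℝ)) / n - P a| ≤ ε := fun a => (htyp a).1
    have htyp2 : ∀ a, P a = 0 → N a = 0 := fun a => (htyp a).2
    have hA : ∏ j, W (zt j, s j) = ∏ a, W a ^ N a := by
      rw [← Finset.prod_fiberwise_of_maps_to
        (g := fun j => (zt j, s j)) (t := Finset.univ)
        (fun j _ => Finset.mem_univ _) (fun j => W (zt j, s j))]
      refine Finset.prod_congr rfl fun a _ => ?_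
      rw [Finset.prod_congr rfl
        (fun j hj => by rw [show (zt j, s j) = a from (Finset.mem_filter.mp hj).2]),
        Finset.prod_const]
    have hC2 : ∏ a, W a ^ N a = (2:ℝ) ^ (∑ a, (N a : ℝ) * L a) := by
      rw [two_rpow_sum]
      refine Finset.prod_congr rfl fun a _ => ?_
      rcases Nat.eq_zero_or_pos (N a) with h0 | hpos
      · simp [h0]
      · have hPa : 0 < P a := by
          rcases eq_or_lt_of_le (hP0 a) with h | h
          · exact absurd (htyp2 a h.symm) (Nat.pos_iff_ne_zero.mp hpos)
          · exact h
        have hWa : 0 < W a := hWpos a hPa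
        rw [mul_comm, Real.rpow_mul (by norm_num : (0:ℝ) ≤ 2),
          show (2:ℝ) ^ L a = W a from Real.rpow_logb two_pos (by norm_num) hWa,
          Real.rpow_natCast]
    have hB : (n:ℝ) * (ent R - ent P) - (n:ℝ) * ε * C ≤ ∑ a, (N a : ℝ) * L a := by
      have per : ∀ a, (n:ℝ) * (P a * L a) - (n:ℝ) * ε * |L a| ≤ (N a : ℝ) * L a := by
        intro a
        have h1 : |(N a : ℝ) - n * P a| ≤ n * ε := by
          have h3 : (N a : ℝ) - n * P a = n * ((N a : ℝ) / n - P a) := by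
            rw [mul_sub, mul_div_cancel₀ _ hn0.ne']
          rw [h3, abs_mul, abs_of_pos hn0]
          exact mul_le_mul_of_nonneg_left (htyp1 a) hn0.le
        have h5 : |((N a : ℝ) - n * P a) * L a| ≤ n * ε * |L a| := by
          rw [abs_mul]
          exact mul_le_mul_of_nonneg_right h1 (abs_nonneg _)
        have h6 : -((n:ℝ) * ε * |L a|) ≤ ((N a : ℝ) - n * P a) * L a := by
          have := neg_abs_le (((N a : ℝ) - n * P a) * L a)
          linarith
        nlinarith [h6]
      calc (n:ℝ) * (ent R - ent P) - (n:ℝ) * ε * C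
          = ∑ a, ((n:ℝ) * (P a * L a) - (n:ℝ) * ε * |L a|) := by
            rw [Finset.sum_sub_distrib, ← Finset.mul_sum, ← Finset.mul_sum, hPL, hCdef]
        _ ≤ ∑ a, (N a : ℝ) * L a := Finset.sum_le_sum fun a _ => per a
    have hExp : -((n:ℝ) * ((ent P - ent R) + δ)) ≤ ∑ a, (N a : ℝ) * L a := by
      have hεCn : (n:ℝ) * ε * C ≤ (n:ℝ) * δ := by
        have := mul_le_mul_of_nonneg_left hεC hn0.le
        nlinarith
      nlinarith [hB]
    rw [hA, hC2]
    exact Real.rpow_le_rpow_of_exponent_le one_le_two hExp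
  -- the sum of products over T is at most 1
  have hfac : ∀ j : Fin n, ∑ x : ZMod (p ^ r),
      (if (QuotientAddGroup.mk x : Qt) = (QuotientAddGroup.mk (z j) : Qt)
        then W (x, s j) else 0) ≤ 1 := by
    intro j
    have hnum : ∑ x : ZMod (p ^ r),
        (if (QuotientAddGroup.mk x : Qt) = (QuotientAddGroup.mk (z j) : Qt)
          then P (x, s j) else 0)
        = R ((QuotientAddGroup.mk (z j) : Qt), s j) := by
      rw [hRdef]
      show _ = ∑ ω : ZMod (p ^ r) × 𝒮,
        if π ω = ((QuotientAddGroup.mk (z j) : Qt), s j) then P ω else 0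
      rw [Fintype.sum_prod_type]
      refine Finset.sum_congr rfl fun x _ => ?_
      rw [hπ]
      by_cases h : (QuotientAddGroup.mk x : Qt) = (QuotientAddGroup.mk (z j) : Qt)
      · simp [h, Prod.ext_iff]
      · simp [h, Prod.ext_iff]
    have heq : ∑ x : ZMod (p ^ r),
        (if (QuotientAddGroup.mk x : Qt) = (QuotientAddGroup.mk (z j) : Qt)
          then W (x, s j) else 0)
        = (∑ x : ZMod (p ^ r),
            (if (QuotientAddGroup.mk x : Qt) = (QuotientAddGroup.mk (z j) : Qt)
              then P (x, s j) else 0)) / R ((QuotientAddGroup.mk (z j) : Qt), s j) := by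
      rw [Finset.sum_div]
      refine Finset.sum_congr rfl fun x _ => ?_
      by_cases h : (QuotientAddGroup.mk x : Qt) = (QuotientAddGroup.mk (z j) : Qt)
      · rw [if_pos h, if_pos h, hWdef]
        show P (x, s j) / R (π (x, s j)) = _
        rw [show π (x, s j) = ((QuotientAddGroup.mk (z j) : Qt), s j) from by
          rw [hπ]; exact Prod.ext h rfl]
      · rw [if_neg h, if_neg h, zero_div]
    rw [heq, hnum]
    exact div_le_one_of_le₀ le_rfl (hR0 _)
  have hsum1 : ∑ zt ∈ T, ∏ j, W (zt j, s j) ≤ 1 := by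
    have hstep1 : ∑ zt ∈ T, ∏ j, W (zt j, s j)
        = ∑ zt ∈ T, ∏ j, (if (QuotientAddGroup.mk (zt j) : Qt)
            = (QuotientAddGroup.mk (z j) : Qt) then W (zt j, s j) else 0) := by
      refine Finset.sum_congr rfl fun zt hzt => Finset.prod_congr rfl fun j _ => ?_
      rw [if_pos (QuotientAddGroup.eq_iff_sub_mem.mpr ((Finset.mem_filter.mp hzt).2.1 j))]
    rw [hstep1]
    calc ∑ zt ∈ T, ∏ j, (if (QuotientAddGroup.mk (zt j) : Qt)
            = (QuotientAddGroup.mk (z j) : Qt) then W (zt j, s j) else 0)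
        ≤ ∑ zt : Fin n → ZMod (p ^ r), ∏ j, (if (QuotientAddGroup.mk (zt j) : Qt)
            = (QuotientAddGroup.mk (z j) : Qt) then W (zt j, s j) else 0) := by
          refine Finset.sum_le_sum_of_subset_of_nonneg (Finset.filter_subset _ _)
            (fun zt _ _ => Finset.prod_nonneg fun j _ => ?_)
          split <;> [exact hW0 _; exact le_rfl]
      _ = ∏ j, ∑ x : ZMod (p ^ r), (if (QuotientAddGroup.mk x : Qt)
            = (QuotientAddGroup.mk (z j) : Qt) then W (x, s j) else 0) := by
          rw [Finset.prod_univ_sum (fun _ => Finset.univ)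
            (fun j x => if (QuotientAddGroup.mk x : Qt)
              = (QuotientAddGroup.mk (z j) : Qt) then W (x, s j) else 0),
            Fintype.piFinset_univ]
      _ ≤ 1 := Finset.prod_le_one
          (fun j _ => Finset.sum_nonneg fun x _ => by
            split <;> [exact hW0 _; exact le_rfl])
          (fun j _ => hfac j)
  -- combine
  have hpos : (0:ℝ) < (2:ℝ) ^ (-((n:ℝ) * ((ent P - ent R) + δ))) :=
    Real.rpow_pos_of_pos two_pos _
  have hfin : (T.card : ℝ) * (2:ℝ) ^ (-((n:ℝ) * ((ent P - ent R) + δ))) ≤ 1 := by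
    calc (T.card : ℝ) * (2:ℝ) ^ (-((n:ℝ) * ((ent P - ent R) + δ)))
        = ∑ _zt ∈ T, (2:ℝ) ^ (-((n:ℝ) * ((ent P - ent R) + δ))) := by
          rw [Finset.sum_const, nsmul_eq_mul]
      _ ≤ ∑ zt ∈ T, ∏ j, W (zt j, s j) := Finset.sum_le_sum hlow
      _ ≤ 1 := hsum1
  have hfin2 : (T.card : ℝ) ≤ (2:ℝ) ^ ((n:ℝ) * ((ent P - ent R) + δ)) := by
    have h := (le_div_iff₀ hpos).mpr hfin
    rwa [one_div, ← Real.rpow_neg (by norm_num : (0:ℝ) ≤ 2), neg_neg] at h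
  have hce : condEnt P Prod.fst Prod.snd
      - condEnt P (fun zs => ((QuotientAddGroup.mk zs.1) : Qt)) Prod.snd
      = ent P - ent R := by
    unfold condEnt Hent
    have h1 : distOf P (fun ω : ZMod (p ^ r) × 𝒮 => (ω.1, ω.2)) = P := by
      funext a
      simp [distOf]
    have h2 : distOf P (fun ω : ZMod (p ^ r) × 𝒮 =>
        ((QuotientAddGroup.mk ω.1 : Qt), ω.2)) = R := rfl
    rw [h1, h2]
    ring
  rw [hcard, hce]
  exact hfin2


end
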